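/- Let Δ⁺ ⊂ ℝ² be the triangle with vertices (0,0), (3,3), (3,-3) and μ(x,y) = ((x-y)(x+y))² = (x²-y²)². Then the barycenter b = (∫_{Δ⁺} p μ dp)/(∫_{Δ⁺} μ dp) satisfies b - (2,0) ∈ relative interior of the cone generated by (1,1) and (1,-1); that is, writing b = (b₁, b₂), one has b₁ - 2 > |b₂| (and by symmetry b₂ = 0, so the condition is b₁ > 2). -/

import Mathlib

open MeasureTheory Set

/-- The triangle with vertices (0,0), (3,3), (3,-3) in ℝ². -/
noncomputable def delta17 : Set (ℝ × ℝ) :=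
  convexHull ℝ {((0:ℝ), (0:ℝ)), ((3:ℝ), (3:ℝ)), ((3:ℝ), (-3:ℝ))}

/-- The Duistermaat–Heckman density `((x-y)(x+y))² = (x² - y²)²`. -/
noncomputable def mu17 (p : ℝ × ℝ) : ℝ := (p.1 ^ 2 - p.2 ^ 2) ^ 2

/-- The barycenter of `delta17` with respect to `(x² - y²)² dp`. -/
noncomputable def bar17 : ℝ × ℝ :=
  ((∫ p in delta17, p.1 * mu17 p) / (∫ p in delta17, mu17 p),
   (∫ p in delta17, p.2 * mu17 p) / (∫ p in delta17, mu17 p))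

lemma delta17_eq : delta17 = {p : ℝ × ℝ | p.1 ≤ 3 ∧ |p.2| ≤ p.1} := by
  apply Subset.antisymm
  · apply convexHull_min
    · rintro p hp
      simp only [mem_insert_iff, mem_singleton_iff] at hp
      rcases hp with rfl | rfl | rfl <;> constructor <;> simp [abs_le] <;> norm_num
    · rintro ⟨x1, y1⟩ ⟨h1, h1'⟩ ⟨x2, y2⟩ ⟨h2, h2'⟩ a b ha hb hab
      simp only [mem_setOf_eq, abs_le] at *
      refine ⟨?_, ?_, ?_⟩ <;> simp only [Prod.smul_mk, Prod.mk_add_mk, smul_eq_mul] <;>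
        nlinarith [h1'.1, h1'.2, h2'.1, h2'.2]
  · rintro ⟨x, y⟩ ⟨hx3, hyx⟩
    simp only [mem_setOf_eq] at hx3 hyx
    rw [abs_le] at hyx
    rcases eq_or_lt_of_le (by linarith [hyx.1, hyx.2] : (0:ℝ) ≤ x) with h0 | h0
    · have hy : y = 0 := by linarith [hyx.1, hyx.2]
      subst hy; rw [← h0]
      exact subset_convexHull ℝ _ (by simp)
    · unfold delta17
      rw [convexHull_insert (by simp), convexHull_pair, mem_convexJoin]
      refine ⟨(0,0), mem_singleton _, (3, 3*y/x), ?_, ?_⟩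
      · have hxy : 0 ≤ x + y := by linarith [hyx.1]
        have hxy' : 0 ≤ x - y := by linarith [hyx.2]
        refine ⟨(x+y)/(2*x), (x-y)/(2*x), by positivity, by positivity,
          by field_simp; ring, ?_⟩
        · simp only [Prod.smul_mk, Prod.mk_add_mk, smul_eq_mul, Prod.mk.injEq]
          constructor <;> field_simp <;> ring
      · refine ⟨1 - x/3, x/3, by linarith, by positivity, by ring, ?_⟩
        simp only [Prod.smul_mk, Prod.mk_add_mk, smul_eq_mul, Prod.mk.injEq]
        constructor <;> field_simp <;> ring

lemma delta17_meas : MeasurableSet delta17 := by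
  rw [delta17_eq]
  have : IsClosed {p : ℝ × ℝ | p.1 ≤ 3 ∧ |p.2| ≤ p.1} :=
    (isClosed_le continuous_fst continuous_const).inter
      (isClosed_le continuous_snd.abs continuous_fst)
  exact this.measurableSet

lemma tri_int (f : ℝ → ℝ → ℝ) (hf : Continuous (fun p : ℝ × ℝ => f p.1 p.2)) :
    ∫ p in delta17, f p.1 p.2 = ∫ x in Icc (0:ℝ) 3, ∫ y in Icc (-x) x, f x y := by
  have hsub : delta17 ⊆ Icc (0:ℝ) 3 ×ˢ Icc (-3:ℝ) 3 := by
    rw [delta17_eq]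
    rintro ⟨x, y⟩ ⟨h1, h2⟩
    rw [abs_le] at h2
    have hx0 : (0:ℝ) ≤ x := by linarith [h2.1, h2.2]
    exact ⟨⟨hx0, h1⟩, ⟨by linarith [h2.1], by linarith [h2.2]⟩⟩
  have h1 : ∫ p in delta17, f p.1 p.2
      = ∫ p in Icc (0:ℝ) 3 ×ˢ Icc (-3:ℝ) 3, delta17.indicator (fun p : ℝ × ℝ => f p.1 p.2) p := by
    rw [setIntegral_indicator delta17_meas, inter_eq_self_of_subset_right hsub]
  have hint : IntegrableOn (delta17.indicator (fun p : ℝ × ℝ => f p.1 p.2))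
      (Icc (0:ℝ) 3 ×ˢ Icc (-3:ℝ) 3) :=
    (hf.continuousOn.integrableOn_compact (isCompact_Icc.prod isCompact_Icc)).indicator delta17_meas
  rw [Measure.volume_eq_prod ℝ ℝ] at hint
  rw [h1, show (volume : Measure (ℝ × ℝ)) = (volume.prod volume) from Measure.volume_eq_prod ℝ ℝ ,
    setIntegral_prod _ hint]
  apply setIntegral_congr_fun measurableSet_Icc
  intro x hx
  have hxy : ∀ y : ℝ, delta17.indicator (fun p : ℝ × ℝ => f p.1 p.2) (x, y)
      = (Icc (-x) x).indicator (fun y => f x y) y := by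
    intro y
    rw [delta17_eq]
    by_cases h : |y| ≤ x
    · rw [indicator_of_mem (by exact ⟨hx.2, h⟩), indicator_of_mem (mem_Icc.mpr (abs_le.mp h))]
    · rw [indicator_of_notMem (by simp [h]), indicator_of_notMem (fun hc => h (abs_le.mpr (mem_Icc.mp hc)))]
  simp_rw [hxy]
  rw [setIntegral_indicator measurableSet_Icc,
    inter_eq_self_of_subset_right (Icc_subset_Icc (by linarith [hx.2]) hx.2)]

lemma icc_int (a b : ℝ) (h : a ≤ b) (g : ℝ → ℝ) :
    ∫ y in Icc a b, g y = ∫ y in a..b, g y := by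
  rw [integral_Icc_eq_integral_Ioc, intervalIntegral.integral_of_le h]

lemma inner0 (x : ℝ) : ∫ y in (-x)..x, (x^2 - y^2)^2 = 16/15*x^5 := by
  have h : ∀ y : ℝ, HasDerivAt (fun y : ℝ => y^5/5 - 2*x^2*y^3/3 + x^4*y) ((x^2-y^2)^2) y := by
    intro y
    have := (((hasDerivAt_pow 5 y).div_const 5).sub
      (((hasDerivAt_pow 3 y).const_mul (2*x^2)).div_const 3)).add
      ((hasDerivAt_id y).const_mul (x^4))
    exact this.congr_deriv (by push_cast; ring)
  rw [intervalIntegral.integral_eq_sub_of_hasDerivAt (fun y _ => h y)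
    ((Continuous.intervalIntegrable (by continuity) _ _))]
  ring

lemma inner2 (x : ℝ) : ∫ y in (-x)..x, y * (x^2 - y^2)^2 = 0 := by
  have h : ∀ y : ℝ, HasDerivAt (fun y : ℝ => -(x^2 - y^2)^3/6) (y * (x^2 - y^2)^2) y := by
    intro y
    have hb : HasDerivAt (fun y : ℝ => x^2 - y^2) (-(2*y)) y := by
      simpa using (hasDerivAt_pow 2 y).const_sub (x^2)
    have := ((hb.pow 3).neg).div_const 6
    exact this.congr_deriv (by push_cast; ring)
  rw [intervalIntegral.integral_eq_sub_of_hasDerivAt (fun y _ => h y)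
    ((Continuous.intervalIntegrable (by continuity) _ _))]
  ring

lemma I0 : ∫ p in delta17, mu17 p = 648/5 := by
  have h := tri_int (fun x y => (x^2 - y^2)^2) (by continuity)
  simp only [mu17]
  rw [h, setIntegral_congr_fun measurableSet_Icc (fun x hx => by
    rw [icc_int _ _ (by linarith [hx.1] : -x ≤ x), inner0]),
    icc_int 0 3 (by norm_num), intervalIntegral.integral_const_mul,
    integral_pow]
  norm_num

lemma I1 : ∫ p in delta17, p.1 * mu17 p = 11664/35 := by
  have h := tri_int (fun x y => x * (x^2 - y^2)^2) (by continuity)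
  simp only [mu17]
  rw [h, setIntegral_congr_fun measurableSet_Icc (fun x hx => by
    rw [icc_int _ _ (by linarith [hx.1] : -x ≤ x),
      intervalIntegral.integral_const_mul, inner0]),
    icc_int 0 3 (by norm_num)]
  have : ∀ x : ℝ, x * (16/15*x^5) = 16/15 * x^6 := fun x => by ring
  simp_rw [this]
  rw [intervalIntegral.integral_const_mul, integral_pow]
  norm_num

lemma I2 : ∫ p in delta17, p.2 * mu17 p = 0 := by
  have h := tri_int (fun x y => y * (x^2 - y^2)^2) (by continuity)
  simp only [mu17]
  rw [h, setIntegral_congr_fun measurableSet_Icc (fun x hx => by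
    rw [icc_int _ _ (by linarith [hx.1] : -x ≤ x), inner2])]
  simp


/-- K-stability of the first smooth Fano compactification of SO₄(ℂ): writing
`b = (b₁, b₂)` for the barycenter, one has `b₂ = 0` and `b₁ - 2 > |b₂|`, i.e.
`b - (2,0)` lies in the relative interior of the cone generated by (1,1), (1,-1). -/
theorem stmt17 : bar17.2 = 0 ∧ |bar17.2| < bar17.1 - 2 := by
  have h2 : bar17.2 = 0 := by simp only [bar17, I2, zero_div]
  refine ⟨h2, ?_⟩
  rw [h2, abs_zero]
  have h1 : bar17.1 = 18/7 := by
    simp only [bar17, I0, I1]; norm_num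
  rw [h1]; norm_num
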